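/- Let A be a two-block SBM adjacency matrix with parameters (N, p). Then for all distinct indices i ≠ j lying in the same community, E[(A³)_{ij}] = (N−2)(N−3)p³ + N(3N−5)p(1−p)² + p + 2(N−2)p² + 2Np(1−p). -/

import Mathlib

open MeasureTheory ProbabilityTheory Matrix Finset

def sameCom (N : ℕ) (i j : Fin (2 * N)) : Prop := ((i : ℕ) < N ↔ (j : ℕ) < N)

instance (N : ℕ) (i j : Fin (2 * N)) : Decidable (sameCom N i j) := by
  unfold sameCom; infer_instance

noncomputable def bernoulliReal (q : ℝ) : Measure ℝ :=
  ENNReal.ofReal q • Measure.dirac (1 : ℝ) + ENNReal.ofReal (1 - q) • Measure.dirac (0 : ℝ)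

structure IsSBM {Ω : Type*} [MeasurableSpace Ω] (μ : Measure Ω) (N : ℕ) (p : ℝ)
    (A : Ω → Matrix (Fin (2 * N)) (Fin (2 * N)) ℝ) : Prop where
  isProb : IsProbabilityMeasure μ
  symm : ∀ ω, (A ω)ᵀ = A ω
  diag : ∀ ω i, A ω i i = 0
  vals : ∀ ω i j, A ω i j = 0 ∨ A ω i j = 1
  meas : ∀ i j, Measurable fun ω => A ω i j
  indep : iIndepFun
    (fun (e : {e : Fin (2 * N) × Fin (2 * N) // e.1 < e.2}) ω => A ω e.1.1 e.1.2) μ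
  bern : ∀ i j, i < j →
    μ.map (fun ω => A ω i j) = bernoulliReal (if sameCom N i j then p else 1 - p)

lemma integrable_id_smul_dirac (c : ENNReal) (hc : c ≠ ⊤) (a : ℝ) :
    Integrable (fun x : ℝ => x) (c • Measure.dirac a) := by
  rcases eq_or_ne c 0 with h | h
  · simp [h]
  · rw [integrable_smul_measure h hc]
    refine (integrable_const a).congr ?_
    rw [Filter.eventuallyEq_iff_exists_mem]
    exact ⟨{a}, by simp [MeasureTheory.ae_dirac_eq], fun x hx => by simp at hx; simp [hx]⟩

lemma integral_bernoulliReal {q : ℝ} (h0 : 0 ≤ q) :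
    ∫ x, x ∂(bernoulliReal q) = q := by
  unfold bernoulliReal
  rw [integral_add_measure (integrable_id_smul_dirac _ ENNReal.ofReal_ne_top _)
      (integrable_id_smul_dirac _ ENNReal.ofReal_ne_top _),
    integral_smul_measure, integral_smul_measure, integral_dirac, integral_dirac]
  simp [ENNReal.toReal_ofReal h0]

noncomputable def qv (N : ℕ) (p : ℝ) (a b : Fin (2*N)) : ℝ := if sameCom N a b then p else 1 - p
noncomputable def Mv (N : ℕ) (p : ℝ) (a b : Fin (2*N)) : ℝ := if a = b then 0 else qv N p a b

section Core
variable {Ω : Type*} [MeasurableSpace Ω] {μ : Measure Ω} {N : ℕ} {p : ℝ}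
  {A : Ω → Matrix (Fin (2 * N)) (Fin (2 * N)) ℝ}

lemma qv_symm (a b : Fin (2*N)) : qv N p a b = qv N p b a := by
  unfold qv
  by_cases h : sameCom N a b
  · rw [if_pos h, if_pos (show sameCom N b a from h.symm)]
  · rw [if_neg h, if_neg (fun h' : sameCom N b a => h h'.symm)]

lemma A_symm (hA : IsSBM μ N p A) (ω : Ω) (a b : Fin (2*N)) : A ω a b = A ω b a := by
  conv_lhs => rw [← hA.symm ω]
  rfl

lemma entry_exp (hA : IsSBM μ N p A) (hp0 : 0 ≤ p) (hp1 : p ≤ 1) (a b : Fin (2*N)) :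
    ∫ ω, A ω a b ∂μ = Mv N p a b := by
  have key : ∀ a b : Fin (2*N), a < b → ∫ ω, A ω a b ∂μ = Mv N p a b := by
    intro a b hab
    have hm := hA.meas a b
    have : ∫ ω, A ω a b ∂μ = ∫ x, x ∂(μ.map fun ω => A ω a b) := by
      exact (integral_map hm.aemeasurable aestronglyMeasurable_id).symm
    rw [this, hA.bern a b hab, integral_bernoulliReal]
    · unfold Mv qv
      rw [if_neg hab.ne]
    · split <;> linarith
  rcases lt_trichotomy a b with h | h | h
  · exact key a b h
  · subst h
    simp [hA.diag, Mv, integral_zero]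
  · have : (fun ω => A ω a b) = fun ω => A ω b a := by
      funext ω; exact A_symm hA ω a b
    rw [this, key b a h, Mv, Mv, qv_symm]
    simp [eq_comm]

lemma entry_bd (hA : IsSBM μ N p A) (ω : Ω) (a b : Fin (2*N)) :
    0 ≤ A ω a b ∧ A ω a b ≤ 1 := by
  rcases hA.vals ω a b with h | h <;> rw [h] <;> norm_num

lemma integrable_entry_mul (hA : IsSBM μ N p A) (f : Ω → ℝ)
    (hf : Measurable f) (h0 : ∀ ω, 0 ≤ f ω) (h1 : ∀ ω, f ω ≤ 1) :
    Integrable f μ := by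
  have := hA.isProb
  refine (integrable_const (1:ℝ)).mono' hf.aestronglyMeasurable ?_
  filter_upwards with ω
  rw [Real.norm_eq_abs, abs_le]
  constructor
  · linarith [h0 ω]
  · exact h1 ω

end Core

section S
variable {N : ℕ}

def sortE (a b : Fin (2*N)) (h : a ≠ b) : {e : Fin (2 * N) × Fin (2 * N) // e.1 < e.2} :=
  if hab : a < b then ⟨(a, b), hab⟩ else ⟨(b, a), lt_of_le_of_ne (not_lt.1 hab) (Ne.symm h)⟩

lemma sortE_spec (a b : Fin (2*N)) (h : a ≠ b) :
    ((sortE a b h).1.1 = a ∧ (sortE a b h).1.2 = b) ∨ ((sortE a b h).1.1 = b ∧ (sortE a b h).1.2 = a) := by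
  unfold sortE
  split <;> simp

lemma sortE_ne {a b c d : Fin (2*N)} (hab : a ≠ b) (hcd : c ≠ d)
    (h1 : ¬(a = c ∧ b = d)) (h2 : ¬(a = d ∧ b = c)) : sortE a b hab ≠ sortE c d hcd := by
  intro h
  have h' : (sortE a b hab).1 = (sortE c d hcd).1 := congrArg Subtype.val h
  rcases sortE_spec a b hab with ⟨e1, e2⟩ | ⟨e1, e2⟩ <;>
    rcases sortE_spec c d hcd with ⟨f1, f2⟩ | ⟨f1, f2⟩ <;>
  · rw [Prod.ext_iff] at h'
    rw [e1, e2, f1, f2] at h'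
    first
      | exact h1 ⟨h'.1, h'.2⟩ | exact h2 ⟨h'.1, h'.2⟩ | exact h1 ⟨h'.2, h'.1⟩ | exact h2 ⟨h'.2, h'.1⟩
      | (exact absurd h'.1 hab) | (exact absurd h'.1 hcd)
end S


section Core2
variable {Ω : Type*} [MeasurableSpace Ω] {μ : Measure Ω} {N : ℕ} {p : ℝ}
  {A : Ω → Matrix (Fin (2 * N)) (Fin (2 * N)) ℝ}

lemma A_sortE (hA : IsSBM μ N p A) (a b : Fin (2*N)) (h : a ≠ b) :
    (fun ω => A ω a b) = (fun (e : {e : Fin (2 * N) × Fin (2 * N) // e.1 < e.2}) ω => A ω e.1.1 e.1.2) (sortE a b h) := by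
  funext ω
  show A ω a b = A ω (sortE a b h).1.1 (sortE a b h).1.2
  rcases sortE_spec a b h with ⟨e1, e2⟩ | ⟨e1, e2⟩ <;> rw [e1, e2]
  exact A_symm hA ω a b

lemma int_mul2 (hA : IsSBM μ N p A) {a b c d : Fin (2*N)} (hab : a ≠ b) (hcd : c ≠ d)
    (hne : sortE a b hab ≠ sortE c d hcd) :
    ∫ ω, A ω a b * A ω c d ∂μ = (∫ ω, A ω a b ∂μ) * (∫ ω, A ω c d ∂μ) := by
  have hind : IndepFun (fun ω => A ω a b) (fun ω => A ω c d) μ := by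
    rw [A_sortE hA a b hab, A_sortE hA c d hcd]
    exact hA.indep.indepFun hne
  exact hind.integral_mul_eq_mul_integral
    (integrable_entry_mul hA _ (hA.meas a b) (fun ω => (entry_bd hA ω a b).1) (fun ω => (entry_bd hA ω a b).2)).aestronglyMeasurable
    (integrable_entry_mul hA _ (hA.meas c d) (fun ω => (entry_bd hA ω c d).1) (fun ω => (entry_bd hA ω c d).2)).aestronglyMeasurable

lemma int_mul3 (hA : IsSBM μ N p A) {a b c d e f : Fin (2*N)} (hab : a ≠ b) (hcd : c ≠ d) (hef : e ≠ f)
    (h12 : sortE a b hab ≠ sortE c d hcd) (h13 : sortE a b hab ≠ sortE e f hef)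
    (h23 : sortE c d hcd ≠ sortE e f hef) :
    ∫ ω, A ω a b * A ω c d * A ω e f ∂μ
      = (∫ ω, A ω a b ∂μ) * (∫ ω, A ω c d ∂μ) * (∫ ω, A ω e f ∂μ) := by
  set F := (fun (e : {e : Fin (2 * N) × Fin (2 * N) // e.1 < e.2}) ω => A ω e.1.1 e.1.2) with hF
  have hmeas : ∀ e, Measurable (F e) := fun e => hA.meas e.1.1 e.1.2
  have hind : IndepFun ((fun ω => A ω a b) * (fun ω => A ω c d)) (fun ω => A ω e f) μ := by
    rw [A_sortE hA a b hab, A_sortE hA c d hcd, A_sortE hA e f hef]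
    exact hA.indep.indepFun_mul_left hmeas _ _ _ h13 h23
  have h1 : ∫ ω, A ω a b * A ω c d * A ω e f ∂μ
      = (∫ ω, A ω a b * A ω c d ∂μ) * (∫ ω, A ω e f ∂μ) := by
    have := hind.integral_mul_eq_mul_integral
      (integrable_entry_mul hA _ ((hA.meas a b).mul (hA.meas c d))
        (fun ω => mul_nonneg (entry_bd hA ω a b).1 (entry_bd hA ω c d).1)
        (fun ω => mul_le_one₀ (entry_bd hA ω a b).2 (entry_bd hA ω c d).1 (entry_bd hA ω c d).2)).aestronglyMeasurable
      (integrable_entry_mul hA _ (hA.meas e f) (fun ω => (entry_bd hA ω e f).1) (fun ω => (entry_bd hA ω e f).2)).aestronglyMeasurable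
    exact this
  rw [h1, int_mul2 hA hab hcd h12]
end Core2

noncomputable def EE (N : ℕ) (p : ℝ) (i j k l : Fin (2*N)) : ℝ :=
  if k = i ∨ l = j ∨ k = l then 0
  else if k = j ∧ l = i then p
  else if l = i then Mv N p i k * p
  else if k = j then p * Mv N p j l
  else Mv N p i k * Mv N p k l * Mv N p l j

section Core3
variable {Ω : Type*} [MeasurableSpace Ω] {μ : Measure Ω} {N : ℕ} {p : ℝ}
  {A : Ω → Matrix (Fin (2 * N)) (Fin (2 * N)) ℝ}

lemma Mv_ij {i j : Fin (2*N)} (hij : i ≠ j) (hcom : sameCom N i j) : Mv N p i j = p := by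
  simp [Mv, qv, hij, hcom]

lemma per_kl (hA : IsSBM μ N p A) (hp0 : 0 ≤ p) (hp1 : p ≤ 1)
    {i j : Fin (2*N)} (hij : i ≠ j) (hcom : sameCom N i j) (k l : Fin (2*N)) :
    ∫ ω, A ω i k * A ω k l * A ω l j ∂μ = EE N p i j k l := by
  by_cases hki : k = i
  · rw [hki]
    simp [EE, hA.diag]
  by_cases hlj : l = j
  · rw [hlj]
    simp [EE, hA.diag, hlj]
  by_cases hkl : k = l
  · rw [hkl]
    simp [EE, hA.diag, hkl, hki, hlj]
  by_cases hsp : k = j ∧ l = i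
  · rw [hsp.1, hsp.2]
    have hpt : ∀ ω, A ω i j * A ω j i * A ω i j = A ω i j := by
      intro ω
      rw [A_symm hA ω j i]
      rcases hA.vals ω i j with h | h <;> rw [h] <;> ring
    rw [integral_congr_ae (Filter.Eventually.of_forall hpt), entry_exp hA hp0 hp1,
      Mv_ij hij hcom, EE]
    simp [hki, hlj, hkl, hsp, hij, Ne.symm hij]
  by_cases hli : l = i
  · rw [hli]
    have hkj : k ≠ j := fun h => hsp ⟨h, hli⟩
    have hpt : ∀ ω, A ω i k * A ω k i * A ω i j = A ω i k * A ω i j := by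
      intro ω
      rw [A_symm hA ω k i]
      rcases hA.vals ω i k with h | h <;> rw [h] <;> ring
    rw [integral_congr_ae (Filter.Eventually.of_forall hpt),
      int_mul2 hA (Ne.symm hki) hij
        (sortE_ne _ _ (fun h => hkj h.2) (fun h => hki h.2)),
      entry_exp hA hp0 hp1, entry_exp hA hp0 hp1, Mv_ij hij hcom, EE]
    simp [hki, hlj, hkl, hkj, hli, hij]
  by_cases hkj : k = j
  · rw [hkj]
    have hpt : ∀ ω, A ω i j * A ω j l * A ω l j = A ω i j * A ω j l := by
      intro ω
      rw [A_symm hA ω l j]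
      rcases hA.vals ω j l with h | h <;> rw [h] <;> ring
    rw [integral_congr_ae (Filter.Eventually.of_forall hpt),
      int_mul2 hA hij (show j ≠ l from fun h => hlj h.symm) (sortE_ne _ _ (fun h => hij h.1) (fun h => hli h.1.symm)),
      entry_exp hA hp0 hp1, entry_exp hA hp0 hp1, Mv_ij hij hcom, EE]
    simp [hki, hlj, hkl, hli, hsp, hkj, Ne.symm hij, (show j ≠ l from fun h => hlj h.symm)]
  · rw [int_mul3 hA (Ne.symm hki) hkl (fun h => hlj h)
      (sortE_ne _ _ (fun h => hki h.1.symm) (fun h => hli h.1.symm))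
      (sortE_ne _ _ (fun h => hli h.1.symm) (fun h => hij h.1))
      (sortE_ne _ _ (fun h => hlj h.2) (fun h => hkj h.1)),
      entry_exp hA hp0 hp1, entry_exp hA hp0 hp1, entry_exp hA hp0 hp1, EE]
    simp [hki, hlj, hkl, hli, hkj, hsp]
end Core3

lemma card_lt (N : ℕ) : (Finset.univ.filter fun k : Fin (2 * N) => (k : ℕ) < N).card = N := by
  have e : {k : Fin (2*N) // (k:ℕ) < N} ≃ Fin N :=
    ⟨fun m => ⟨(m : Fin (2*N)), m.2⟩, fun m => ⟨⟨m, by omega⟩, by simp⟩,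
     fun m => Subtype.ext (Fin.ext rfl), fun m => Fin.ext rfl⟩
  rw [← Fintype.card_subtype, Fintype.card_congr e, Fintype.card_fin]

lemma sum_split (N : ℕ) (x y : ℝ) :
    ∑ k : Fin (2 * N), (if (k : ℕ) < N then x else y) = N * x + N * y := by
  rw [Finset.sum_ite]
  have h1 := card_lt N
  have h2 : (Finset.univ.filter fun k : Fin (2 * N) => ¬ (k : ℕ) < N).card = N := by
    have := Finset.card_filter_add_card_filter_not
      (s := (Finset.univ : Finset (Fin (2*N)))) (p := fun k => (k : ℕ) < N)
    simp only [Finset.card_univ, Fintype.card_fin] at this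
    omega
  rw [Finset.sum_const, Finset.sum_const, h1, h2]
  simp [nsmul_eq_mul]

section Alg
variable {N : ℕ} {p : ℝ}

lemma qv_self (v : Fin (2*N)) : qv N p v v = p := by simp [qv, sameCom]

lemma sum_com (v : Fin (2*N)) (x y : ℝ) :
    ∑ k : Fin (2*N), (if sameCom N v k then x else y) = N * x + N * y := by
  by_cases hv : (v : ℕ) < N
  · have h : ∀ k : Fin (2*N), (if sameCom N v k then x else y) = if (k:ℕ) < N then x else y := by
      intro k; by_cases hk : (k:ℕ) < N <;> simp [sameCom, hk, hv]
    rw [Finset.sum_congr rfl (fun k _ => h k), sum_split]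
  · have h : ∀ k : Fin (2*N), (if sameCom N v k then x else y) = if (k:ℕ) < N then y else x := by
      intro k; by_cases hk : (k:ℕ) < N <;> simp [sameCom, hk, hv]
    rw [Finset.sum_congr rfl (fun k _ => h k), sum_split]
    ring

lemma sum_fun_q (v : Fin (2*N)) (F : ℝ → ℝ) :
    ∑ k : Fin (2*N), F (qv N p v k) = N * F p + N * F (1-p) := by
  have h : ∀ k : Fin (2*N), F (qv N p v k) = if sameCom N v k then F p else F (1-p) := by
    intro k; unfold qv; split <;> rfl
  rw [Finset.sum_congr rfl (fun k _ => h k), sum_com]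

lemma sum_exception (g : Fin (2*N) → ℝ) (a : Fin (2*N)) (c : ℝ) :
    ∑ k : Fin (2*N), (if k = a then c else g k) = c - g a + ∑ k : Fin (2*N), g k := by
  have h1 : ∑ k : Fin (2*N), (if k = a then c else g k)
      = (if a = a then c else g a) + ∑ k ∈ Finset.univ.erase a, (if k = a then c else g k) :=
    (Finset.add_sum_erase _ _ (Finset.mem_univ a)).symm
  have h2 : ∑ k : Fin (2*N), g k = g a + ∑ k ∈ Finset.univ.erase a, g k :=
    (Finset.add_sum_erase _ _ (Finset.mem_univ a)).symm
  have h3 : ∑ k ∈ Finset.univ.erase a, (if k = a then c else g k)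
      = ∑ k ∈ Finset.univ.erase a, g k :=
    Finset.sum_congr rfl (fun k hk => if_neg (Finset.ne_of_mem_erase hk))
  rw [h1, h3, if_pos rfl, h2]
  ring

lemma sum_Mv_left (v : Fin (2*N)) (F : Fin (2*N) → ℝ) :
    ∑ k : Fin (2*N), Mv N p v k * F k = (∑ k : Fin (2*N), qv N p v k * F k) - p * F v := by
  have h : ∀ k : Fin (2*N), Mv N p v k * F k = if k = v then 0 else qv N p v k * F k := by
    intro k
    by_cases hk : k = v
    · simp [hk, Mv]
    · simp [Mv, Ne.symm hk, hk]
  rw [Finset.sum_congr rfl (fun k _ => h k), sum_exception, qv_self]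
  ring

lemma sum_Mv_right (w : Fin (2*N)) (F : Fin (2*N) → ℝ) :
    ∑ l : Fin (2*N), F l * Mv N p l w = (∑ l : Fin (2*N), F l * qv N p l w) - F w * p := by
  have h : ∀ l : Fin (2*N), F l * Mv N p l w = if l = w then 0 else F l * qv N p l w := by
    intro l
    by_cases hl : l = w
    · simp [hl, Mv]
    · simp [Mv, hl]
  rw [Finset.sum_congr rfl (fun l _ => h l), sum_exception, qv_self]
  ring

lemma sum_qq (v w : Fin (2*N)) :
    ∑ l : Fin (2*N), qv N p v l * qv N p l w
      = if sameCom N v w then N * (p^2 + (1-p)^2) else N * (2 * p * (1-p)) := by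
  by_cases h : sameCom N v w
  · rw [if_pos h]
    have hc : ∀ l : Fin (2*N), qv N p v l * qv N p l w
        = if sameCom N v l then p * p else (1-p) * (1-p) := by
      intro l
      by_cases h2 : (v : ℕ) < N
      · have hw : (w : ℕ) < N := h.mp h2
        by_cases h1 : (l : ℕ) < N <;> simp [qv, sameCom, h1, h2, hw]
      · have hw : ¬ (w : ℕ) < N := fun hw => h2 (h.mpr hw)
        by_cases h1 : (l : ℕ) < N <;> simp [qv, sameCom, h1, h2, hw]
    rw [Finset.sum_congr rfl (fun l _ => hc l), sum_com]
    ring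
  · rw [if_neg h]
    have hc : ∀ l : Fin (2*N), qv N p v l * qv N p l w
        = if sameCom N v l then p * (1-p) else (1-p) * p := by
      intro l
      by_cases h2 : (v : ℕ) < N
      · have hw : ¬ (w : ℕ) < N := fun hw => h ⟨fun _ => hw, fun _ => h2⟩
        by_cases h1 : (l : ℕ) < N <;> simp [qv, sameCom, h1, h2, hw]
      · have hw : (w : ℕ) < N := by
          by_contra hw
          exact h ⟨fun h' => absurd h' h2, fun h' => absurd h' hw⟩
        by_cases h1 : (l : ℕ) < N <;> simp [qv, sameCom, h1, h2, hw]
    rw [Finset.sum_congr rfl (fun l _ => hc l), sum_com]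
    ring

lemma sum_q_if {i j : Fin (2*N)} (hcom : sameCom N i j) (c1 c2 : ℝ) :
    ∑ k : Fin (2*N), qv N p i k * (if sameCom N k j then c1 else c2)
      = N * (p * c1) + N * ((1-p) * c2) := by
  have hc : ∀ k : Fin (2*N), qv N p i k * (if sameCom N k j then c1 else c2)
      = if sameCom N i k then p * c1 else (1-p) * c2 := by
    intro k
    by_cases hi : (i : ℕ) < N
    · have hj : (j : ℕ) < N := hcom.mp hi
      by_cases hk : (k : ℕ) < N <;> simp [qv, sameCom, hi, hj, hk]
    · have hj : ¬ (j : ℕ) < N := fun h => hi (hcom.mpr h)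
      by_cases hk : (k : ℕ) < N <;> simp [qv, sameCom, hi, hj, hk]
  rw [Finset.sum_congr rfl (fun k _ => hc k), sum_com]

end Alg

section Alg2
variable {N : ℕ} {p : ℝ}

lemma sameCom_symm {i j : Fin (2*N)} (h : sameCom N i j) : sameCom N j i := h.symm

lemma qv_symm' (a b : Fin (2*N)) : qv N p a b = qv N p b a := by
  unfold qv
  by_cases h : sameCom N a b
  · rw [if_pos h, if_pos (sameCom_symm h)]
  · rw [if_neg h, if_neg (fun h' => h (sameCom_symm h'))]

lemma Mv_symm (a b : Fin (2*N)) : Mv N p a b = Mv N p b a := by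
  by_cases h : a = b
  · simp [Mv, h]
  · simp [Mv, h, Ne.symm h, qv_symm' a b]

lemma Mv_ne {a b : Fin (2*N)} (h : a ≠ b) : Mv N p a b = qv N p a b := by simp [Mv, h]

lemma Mv_ij' {i j : Fin (2*N)} (hij : i ≠ j) (hcom : sameCom N i j) : Mv N p i j = p := by
  simp [Mv, qv, hij, hcom]

lemma EE_decomp {i j : Fin (2*N)} (hij : i ≠ j) (hcom : sameCom N i j) (k l : Fin (2*N)) :
    EE N p i j k l = Mv N p i k * (Mv N p k l * Mv N p l j)
      + (if l = i then (if k = j then p - p^3 else Mv N p i k * (p * (1 - qv N p i k))) else 0)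
      + (if k = j then (if l = i then 0 else Mv N p j l * (p * (1 - qv N p j l))) else 0) := by
  have hMij : Mv N p i j = p := Mv_ij' hij hcom
  have hMji : Mv N p j i = p := Mv_ij' (Ne.symm hij) (sameCom_symm hcom)
  by_cases hki : k = i
  · rw [hki]
    simp [EE, Mv, hij, Ne.symm hij]
  by_cases hlj : l = j
  · rw [hlj]
    simp [EE, Mv, hij, Ne.symm hij, hki]
  by_cases hkl : k = l
  · rw [← hkl]
    simp [EE, Mv, hki, hlj, hkl, fun h => hki (hkl.symm ▸ h : k = i)]
    by_cases h2 : l = i <;> simp [h2]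
  by_cases hsp : k = j ∧ l = i
  · rw [hsp.1, hsp.2]
    simp [EE, hij, Ne.symm hij, hMij, hMji]
    ring
  by_cases hli : l = i
  · have hkj : k ≠ j := fun h => hsp ⟨h, hli⟩
    rw [hli, Mv_symm k i]
    simp [EE, hki, hkj, hij, hMij, hMji, Mv_ne (Ne.symm hki)]
    ring
  by_cases hkj : k = j
  · rw [hkj]
    have hjl : j ≠ l := fun h => hlj h.symm
    simp [EE, Ne.symm hij, hlj, hjl, hli, hMij, Mv_ne hjl, Mv_symm l j, Mv_ne (Ne.symm hjl), qv_symm' l j]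
    ring
  · simp [EE, hki, hlj, hkl, hli, hkj, hsp]
    ring

end Alg2


section Alg3
variable {N : ℕ} {p : ℝ}

lemma sum_EE {i j : Fin (2*N)} (hij : i ≠ j) (hcom : sameCom N i j) :
    ∑ k : Fin (2*N), ∑ l : Fin (2*N), EE N p i j k l
      = ((N : ℝ) - 2) * ((N : ℝ) - 3) * p ^ 3 + (N : ℝ) * (3 * N - 5) * p * (1 - p) ^ 2
        + p + 2 * ((N : ℝ) - 2) * p ^ 2 + 2 * N * p * (1 - p) := by
  have hqij : qv N p i j = p := by simp [qv, hcom]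
  have hqji : qv N p j i = p := by simp [qv, sameCom_symm hcom]
  have hMij : Mv N p i j = p := Mv_ij' hij hcom
  have hMji : Mv N p j i = p := Mv_ij' (Ne.symm hij) (sameCom_symm hcom)
  have hsum1 : ∀ v : Fin (2*N), ∑ k : Fin (2*N), qv N p v k * (p * (1 - qv N p v k))
      = N * (p * (p * (1-p))) + N * ((1-p) * (p * (1-(1-p)))) :=
    fun v => sum_fun_q v (fun x => x * (p * (1 - x)))
  have hMsum1 : ∀ v : Fin (2*N), ∑ k : Fin (2*N), Mv N p v k * (p * (1 - qv N p v k))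
      = N * (p * (p * (1-p))) + N * ((1-p) * (p * (1-(1-p)))) - p * (p * (1 - p)) := by
    intro v
    rw [sum_Mv_left v (fun k => p * (1 - qv N p v k)), hsum1 v, qv_self]
  have hT2 : ∑ k : Fin (2*N), ∑ l : Fin (2*N),
      (if l = i then (if k = j then p - p^3 else Mv N p i k * (p * (1 - qv N p i k))) else 0)
      = (p - p^3) - p * (p * (1 - p))
        + (N * (p * (p * (1-p))) + N * ((1-p) * (p * (1-(1-p)))) - p * (p * (1 - p))) := by
    have h1 : ∀ k : Fin (2*N), ∑ l : Fin (2*N),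
        (if l = i then (if k = j then p - p^3 else Mv N p i k * (p * (1 - qv N p i k))) else 0)
        = (if k = j then p - p^3 else Mv N p i k * (p * (1 - qv N p i k))) := by
      intro k
      simp
    rw [Finset.sum_congr rfl (fun k _ => h1 k),
      sum_exception (fun k => Mv N p i k * (p * (1 - qv N p i k))) j (p - p^3),
      hMsum1 i, hMij, hqij]
  have hT3 : ∑ k : Fin (2*N), ∑ l : Fin (2*N),
      (if k = j then (if l = i then 0 else Mv N p j l * (p * (1 - qv N p j l))) else 0)
      = 0 - p * (p * (1 - p))
        + (N * (p * (p * (1-p))) + N * ((1-p) * (p * (1-(1-p)))) - p * (p * (1 - p))) := by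
    have h1 : ∀ k : Fin (2*N), ∑ l : Fin (2*N),
        (if k = j then (if l = i then 0 else Mv N p j l * (p * (1 - qv N p j l))) else 0)
        = (if k = j then ∑ l : Fin (2*N), (if l = i then 0 else Mv N p j l * (p * (1 - qv N p j l))) else 0) := by
      intro k
      by_cases hk : k = j <;> simp [hk]
    have h2 : ∑ k : Fin (2*N),
        (if k = j then ∑ l : Fin (2*N), (if l = i then 0 else Mv N p j l * (p * (1 - qv N p j l))) else 0)
        = ∑ l : Fin (2*N), (if l = i then 0 else Mv N p j l * (p * (1 - qv N p j l))) := by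
      simp
    rw [Finset.sum_congr rfl (fun k _ => h1 k), h2,
      sum_exception (fun l => Mv N p j l * (p * (1 - qv N p j l))) i 0,
      hMsum1 j, hMji, hqji]
  have hinner : ∀ k : Fin (2*N), ∑ l : Fin (2*N), Mv N p k l * Mv N p l j
      = (if sameCom N k j then (N:ℝ)*(p^2+(1-p)^2) else (N:ℝ)*(2*p*(1-p)))
        - qv N p k j * p - p * Mv N p k j := by
    intro k
    rw [sum_Mv_left k (fun l => Mv N p l j), sum_Mv_right j (fun l => qv N p k l), sum_qq k j]
  have hT1 : ∑ k : Fin (2*N), ∑ l : Fin (2*N), Mv N p i k * (Mv N p k l * Mv N p l j)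
      = (N:ℝ) * (p * ((N:ℝ)*(p^2+(1-p)^2))) + (N:ℝ) * ((1-p) * ((N:ℝ)*(2*p*(1-p))))
        - ((N:ℝ)*(p^2+(1-p)^2)) * p
        - p * ((N:ℝ)*(p^2+(1-p)^2) - p * p)
        - p * ((N:ℝ)*(p^2+(1-p)^2) - p * p - p * p) := by
    have h1 : ∀ k : Fin (2*N), ∑ l : Fin (2*N), Mv N p i k * (Mv N p k l * Mv N p l j)
        = Mv N p i k * ((if sameCom N k j then (N:ℝ)*(p^2+(1-p)^2) else (N:ℝ)*(2*p*(1-p)))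
            - qv N p k j * p - p * Mv N p k j) := by
      intro k
      rw [← Finset.mul_sum, hinner k]
    rw [Finset.sum_congr rfl (fun k _ => h1 k),
      sum_Mv_left i (fun k => (if sameCom N k j then (N:ℝ)*(p^2+(1-p)^2) else (N:ℝ)*(2*p*(1-p)))
        - qv N p k j * p - p * Mv N p k j)]
    have h2 : ∀ k : Fin (2*N), qv N p i k * ((if sameCom N k j then (N:ℝ)*(p^2+(1-p)^2) else (N:ℝ)*(2*p*(1-p)))
          - qv N p k j * p - p * Mv N p k j)
        = qv N p i k * (if sameCom N k j then (N:ℝ)*(p^2+(1-p)^2) else (N:ℝ)*(2*p*(1-p)))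
          - qv N p i k * qv N p k j * p - p * (qv N p i k * Mv N p k j) := by
      intro k; ring
    rw [Finset.sum_congr rfl (fun k _ => h2 k), Finset.sum_sub_distrib, Finset.sum_sub_distrib,
      sum_q_if hcom]
    have h3 : ∑ k : Fin (2*N), qv N p i k * qv N p k j * p
        = (∑ k : Fin (2*N), qv N p i k * qv N p k j) * p := by
      rw [Finset.sum_mul]
    have h4 : ∑ k : Fin (2*N), p * (qv N p i k * Mv N p k j)
        = p * ∑ k : Fin (2*N), qv N p i k * Mv N p k j := by
      rw [Finset.mul_sum]
    rw [h3, h4, sum_Mv_right j (fun k => qv N p i k), sum_qq i j, if_pos hcom, hqij, hMij]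
  have hsplit : ∑ k : Fin (2*N), ∑ l : Fin (2*N), EE N p i j k l
      = (∑ k : Fin (2*N), ∑ l : Fin (2*N), Mv N p i k * (Mv N p k l * Mv N p l j))
        + (∑ k : Fin (2*N), ∑ l : Fin (2*N),
            (if l = i then (if k = j then p - p^3 else Mv N p i k * (p * (1 - qv N p i k))) else 0))
        + (∑ k : Fin (2*N), ∑ l : Fin (2*N),
            (if k = j then (if l = i then 0 else Mv N p j l * (p * (1 - qv N p j l))) else 0)) := by
    rw [← Finset.sum_add_distrib, ← Finset.sum_add_distrib]
    refine Finset.sum_congr rfl (fun k _ => ?_)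
    rw [← Finset.sum_add_distrib, ← Finset.sum_add_distrib]
    exact Finset.sum_congr rfl (fun l _ => EE_decomp hij hcom k l)
  rw [hsplit, hT1, hT2, hT3]
  ring

end Alg3


theorem stmt7 {Ω : Type*} [MeasurableSpace Ω] (μ : Measure Ω) (N : ℕ) (hN : 1 ≤ N)
    (p : ℝ) (hp : 1 / 2 < p) (hp1 : p ≤ 1)
    (A : Ω → Matrix (Fin (2 * N)) (Fin (2 * N)) ℝ) (hA : IsSBM μ N p A)
    (i j : Fin (2 * N)) (hij : i ≠ j) (hcom : sameCom N i j) :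
    (∫ ω, ((A ω) ^ 3) i j ∂μ) =
      ((N : ℝ) - 2) * ((N : ℝ) - 3) * p ^ 3 + (N : ℝ) * (3 * N - 5) * p * (1 - p) ^ 2
        + p + 2 * ((N : ℝ) - 2) * p ^ 2 + 2 * N * p * (1 - p) := by
  have hp0 : 0 ≤ p := by linarith
  have hexp : ∀ ω, ((A ω) ^ 3) i j
      = ∑ l : Fin (2*N), ∑ k : Fin (2*N), A ω i k * A ω k l * A ω l j := by
    intro ω
    rw [pow_succ, pow_two, Matrix.mul_apply]
    refine Finset.sum_congr rfl (fun l _ => ?_)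
    rw [Matrix.mul_apply, Finset.sum_mul]
  have hint : ∀ a b c d e f : Fin (2*N),
      Integrable (fun ω => A ω a b * A ω c d * A ω e f) μ := by
    intro a b c d e f
    refine integrable_entry_mul hA _ (((hA.meas a b).mul (hA.meas c d)).mul (hA.meas e f))
      (fun ω => mul_nonneg (mul_nonneg (entry_bd hA ω a b).1 (entry_bd hA ω c d).1)
        (entry_bd hA ω e f).1)
      (fun ω => mul_le_one₀
        (mul_le_one₀ (entry_bd hA ω a b).2 (entry_bd hA ω c d).1 (entry_bd hA ω c d).2)
        (entry_bd hA ω e f).1 (entry_bd hA ω e f).2)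
  rw [integral_congr_ae (Filter.Eventually.of_forall hexp),
    integral_finset_sum _ (fun l _ => integrable_finset_sum _
      (fun k _ => hint i k k l l j))]
  have hstep : ∀ l : Fin (2*N),
      ∫ ω, ∑ k : Fin (2*N), A ω i k * A ω k l * A ω l j ∂μ
      = ∑ k : Fin (2*N), EE N p i j k l := by
    intro l
    rw [integral_finset_sum _ (fun k _ => hint i k k l l j)]
    exact Finset.sum_congr rfl (fun k _ => per_kl hA hp0 hp1 hij hcom k l)
  rw [Finset.sum_congr rfl (fun l _ => hstep l), Finset.sum_comm]
  exact sum_EE hij hcom
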